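/- Let Q_n be the birth-death polynomials with rates λ_n = (4n+1)(4n+2)^2(4n+3), μ_n = (4n-1)(4n)^2(4n+1), defined by Q_0 = 1, Q_1(x) = (λ_0 + μ_0 - x)/λ_0, and -x Q_n(x) = λ_n Q_{n+1}(x) + μ_n Q_{n-1}(x) - (λ_n + μ_n)Q_n(x) for n ≥ 1. Then every zero of Q_n (n ≥ 1) lies in the open interval (4.29, 2^{10} n^4 - 2^{10} n^3 + 35·2^6 n^2). -/

import Mathlib

set_option maxHeartbeats 1000000


theorem stmt_10 (lam mu : ℕ → ℝ)
    (hlam : ∀ n : ℕ, lam n = (4 * (n : ℝ) + 1) * (4 * (n : ℝ) + 2) ^ 2 * (4 * (n : ℝ) + 3))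
    (hmu : ∀ n : ℕ, mu n = (4 * (n : ℝ) - 1) * (4 * (n : ℝ)) ^ 2 * (4 * (n : ℝ) + 1))
    (Q : ℕ → ℝ → ℝ)
    (h0 : ∀ x, Q 0 x = 1)
    (h1 : ∀ x, Q 1 x = (lam 0 + mu 0 - x) / lam 0)
    (hrec : ∀ n : ℕ, 1 ≤ n → ∀ x : ℝ,
      -x * Q n x = lam n * Q (n + 1) x + mu n * Q (n - 1) x - (lam n + mu n) * Q n x)
    (n : ℕ) (hn : 1 ≤ n) (x : ℝ) (hx : Q n x = 0) :
    (4.29 : ℝ) < x ∧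
      x < 2 ^ 10 * (n : ℝ) ^ 4 - 2 ^ 10 * (n : ℝ) ^ 3 + 35 * 2 ^ 6 * (n : ℝ) ^ 2 := by
  have hl0 : lam 0 = 12 := by rw [hlam]; norm_num
  have hm0 : mu 0 = 0 := by rw [hmu]; norm_num
  constructor
  · -- lower bound
    by_contra hc
    push_neg at hc
    have key : ∀ k : ℕ, 0 < Q k x ∧
        (2 * (k : ℝ) + 1) * Q k x ≤ (2 * (k : ℝ) + 2) * Q (k + 1) x := by
      intro k
      induction k with
      | zero =>
        constructor
        · rw [h0]; norm_num
        · rw [h0, h1, hl0, hm0]; push_cast; linarith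
      | succ k ih =>
        obtain ⟨ha, hab⟩ := ih
        set K : ℝ := (k : ℝ) with hK
        have hK0 : (0 : ℝ) ≤ K := Nat.cast_nonneg k
        have hb : 0 < Q (k + 1) x := by nlinarith
        have hr := hrec (k + 1) (by omega) x
        simp only [Nat.add_sub_cancel] at hr
        have hLv : lam (k + 1) = (4 * K + 5) * (4 * K + 6) ^ 2 * (4 * K + 7) := by
          rw [hlam]; push_cast; ring
        have hMv : mu (k + 1) = (4 * K + 3) * (4 * K + 4) ^ 2 * (4 * K + 5) := by
          rw [hmu]; push_cast; ring
        have hL : (0 : ℝ) < lam (k + 1) := by rw [hLv]; positivity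
        have hM : (0 : ℝ) ≤ mu (k + 1) := by rw [hMv]; positivity
        have hkey : (2 * K + 1) * lam (k + 1) - (2 * K + 4) * mu (k + 1)
            - (2 * K + 1) * (2 * K + 4) * x ≥ 0 := by
          have h429 : (2 * K + 1) * (2 * K + 4) * x ≤ (2 * K + 1) * (2 * K + 4) * 4.29 := by
            have hp : (0:ℝ) < (2 * K + 1) * (2 * K + 4) := by positivity
            nlinarith
          rw [hLv, hMv]
          nlinarith [mul_nonneg hK0 hK0, mul_nonneg (mul_nonneg hK0 hK0) hK0,
            mul_nonneg (mul_nonneg (mul_nonneg hK0 hK0) hK0) hK0]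
        have hcq : lam (k + 1) * Q (k + 2) x
            = (lam (k + 1) + mu (k + 1) - x) * Q (k + 1) x - mu (k + 1) * Q k x := by
          linarith
        refine ⟨hb, ?_⟩
        push_cast
        have h1' : (0:ℝ) ≤ (2 * K + 4) * mu (k + 1) *
            ((2 * K + 2) * Q (k + 1) x - (2 * K + 1) * Q k x) := by
          have h := sub_nonneg.mpr hab
          positivity
        have h2' : (0:ℝ) ≤ Q (k + 1) x *
            ((2 * K + 1) * lam (k + 1) - (2 * K + 4) * mu (k + 1)
              - (2 * K + 1) * (2 * K + 4) * x) := mul_nonneg hb.le hkey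
        have hLpos : (0:ℝ) < (2 * K + 1) * lam (k + 1) := by positivity
        nlinarith [mul_pos hLpos hb]
    have h := (key n).1
    rw [hx] at h
    exact lt_irrefl 0 h
  · -- upper bound
    by_contra hc
    push_neg at hc
    have hN1 : (1 : ℝ) ≤ (n : ℝ) := by exact_mod_cast hn
    set N : ℝ := (n : ℝ) with hN
    have key : ∀ k : ℕ, k + 1 ≤ n →
        (1 ≤ (-1 : ℝ) ^ k * Q k x ∧
          (-1 : ℝ) ^ k * Q k x ≤ (-1 : ℝ) ^ (k + 1) * Q (k + 1) x) := by
      intro k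
      induction k with
      | zero =>
        intro _
        have hB : (24 : ℝ) ≤ x := by
          nlinarith [mul_nonneg (pow_nonneg (by linarith : (0:ℝ) ≤ N) 3)
            (sub_nonneg.mpr hN1), mul_le_mul hN1 hN1 (by norm_num) (by linarith)]
        rw [h0, h1, hl0, hm0]
        norm_num
        linarith
      | succ k ih =>
        intro hkn
        obtain ⟨hA, hAB⟩ := ih (by omega)
        have hB1 : 1 ≤ (-1 : ℝ) ^ (k + 1) * Q (k + 1) x := le_trans hA hAB
        set K : ℝ := (k : ℝ) with hK
        have hK0 : (0 : ℝ) ≤ K := Nat.cast_nonneg k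
        have hKN : K + 2 ≤ N := by rw [hK, hN]; exact_mod_cast hkn
        have hr := hrec (k + 1) (by omega) x
        simp only [Nat.add_sub_cancel] at hr
        have hLv : lam (k + 1) = (4 * K + 5) * (4 * K + 6) ^ 2 * (4 * K + 7) := by
          rw [hlam]; push_cast; ring
        have hMv : mu (k + 1) = (4 * K + 3) * (4 * K + 4) ^ 2 * (4 * K + 5) := by
          rw [hmu]; push_cast; ring
        have hL : (0 : ℝ) < lam (k + 1) := by rw [hLv]; positivity
        have hM : (0 : ℝ) ≤ mu (k + 1) := by rw [hMv]; positivity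
        have hbig : 2 * lam (k + 1) + 2 * mu (k + 1) ≤ x := by
          have hval : 2 * lam (k + 1) + 2 * mu (k + 1)
              = 1024*(K+1)^4 + 1024*(K+1)^3 + 704*(K+1)^2 + 224*(K+1) + 24 := by
            rw [hLv, hMv]; ring
          have hm : K + 1 ≤ N - 1 := by linarith
          have hm0 : (0:ℝ) ≤ K + 1 := by linarith
          have hN2 : (2:ℝ) ≤ N := by linarith
          have h4 : (K+1)^4 ≤ (N-1)^4 := pow_le_pow_left₀ hm0 hm 4
          have h3 : (K+1)^3 ≤ (N-1)^3 := pow_le_pow_left₀ hm0 hm 3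
          have h2 : (K+1)^2 ≤ (N-1)^2 := pow_le_pow_left₀ hm0 hm 2
          have hstep : 1024*(N-1)^4 + 1024*(N-1)^3 + 704*(N-1)^2 + 224*(N-1) + 24
              ≤ 1024*N^4 - 1024*N^3 + 2240*N^2 := by
            nlinarith [mul_nonneg (mul_nonneg (by linarith : (0:ℝ) ≤ N - 2) (by linarith : (0:ℝ) ≤ N)) (by linarith : (0:ℝ) ≤ N)]
          have hcx : 1024*N^4 - 1024*N^3 + 2240*N^2 ≤ x := by
            have := hc; norm_num at this ⊢; linarith
          linarith
        have hsign : (-1 : ℝ) ^ (k + 1) = -((-1 : ℝ) ^ k) := by rw [pow_succ]; ring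
        have hsign2 : (-1 : ℝ) ^ (k + 2) = (-1 : ℝ) ^ k := by
          rw [pow_add]; norm_num
        have hcq : lam (k + 1) * ((-1 : ℝ) ^ (k + 2) * Q (k + 2) x)
            = (x - lam (k + 1) - mu (k + 1)) * ((-1 : ℝ) ^ (k + 1) * Q (k + 1) x)
              - mu (k + 1) * ((-1 : ℝ) ^ k * Q k x) := by
          rw [hsign2, hsign]
          linear_combination (-(-1:ℝ) ^ k) * hr
        refine ⟨hB1, ?_⟩
        have hMstep : mu (k + 1) * ((-1 : ℝ) ^ k * Q k x)
            ≤ mu (k + 1) * ((-1 : ℝ) ^ (k + 1) * Q (k + 1) x) :=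
          mul_le_mul_of_nonneg_left hAB hM
        have hu0 : (0:ℝ) ≤ (-1 : ℝ) ^ (k + 1) * Q (k + 1) x := by linarith
        have h5 : lam (k + 1) * ((-1 : ℝ) ^ (k + 1) * Q (k + 1) x)
            ≤ (x - lam (k + 1) - 2 * mu (k + 1)) * ((-1 : ℝ) ^ (k + 1) * Q (k + 1) x) := by
          apply mul_le_mul_of_nonneg_right _ hu0
          linarith
        have h6 : lam (k + 1) * ((-1 : ℝ) ^ (k + 1) * Q (k + 1) x)
            ≤ lam (k + 1) * ((-1 : ℝ) ^ (k + 2) * Q (k + 2) x) := by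
          rw [hcq]; linarith [h5, hMstep]
        exact (mul_le_mul_iff_right₀ hL).mp h6
    obtain ⟨m, hm⟩ : ∃ m, n = m + 1 := ⟨n - 1, by omega⟩
    obtain ⟨hA, hAB⟩ := key m (by omega)
    rw [← hm, hx, mul_zero] at hAB
    linarith
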